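/- Let V_X be a real T×K matrix, S_X a K×K matrix, and W_X an S×K matrix; set X_block := V_X * S_X * W_Xᵀ. Let Y_block be a real S×R matrix. For any R×K' matrix W_Y define W_r := fromColumns W_Y (Y_blockᵀ * W_X) (an R×(K'⊕K) matrix) and S_tr := fromColumns (0 : Matrix K K') S_X (a K×(K'⊕K) matrix). Then X_block * Y_block = V_X * S_tr * W_rᵀ. -/

import Mathlib

open Matrix

/-- Dual padding construction for the induced column cluster basis: if
`X_block = V_X * S_X * W_Xᵀ`, then the product `X_block * Y_block` is represented
exactly in the induced column basis `W_r = [W_Y, Y_blockᵀ * W_X]` with coupling matrix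
`S_tr = [0, S_X]`. -/
theorem stmt_11 {T S R K K' : Type*}
    [Fintype T] [Fintype S] [Fintype R] [Fintype K] [Fintype K']
    (V_X : Matrix T K ℝ) (S_X : Matrix K K ℝ) (W_X : Matrix S K ℝ)
    (Y_block : Matrix S R ℝ) (W_Y : Matrix R K' ℝ) :
    (V_X * S_X * W_Xᵀ) * Y_block =
      V_X * (fromCols (0 : Matrix K K' ℝ) S_X) *
        (fromCols W_Y (Y_blockᵀ * W_X))ᵀ := by
  rw [transpose_fromCols, Matrix.mul_assoc V_X (fromCols 0 S_X), fromCols_mul_fromRows]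
  simp [Matrix.mul_assoc, Matrix.transpose_mul]
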